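/- Let d ≥ 0 and let σ ∈ Σ_d be a permutation with c(σ) cycles (fixed points counted as cycles). Then applying the contraction map d times to the basis element [σ] ∈ 𝒵_d gives ∂^d([σ]) = t^{c(σ)} in 𝒵_0 = K[t]. Consequently, for a = Σ_{σ ∈ Σ_d} f_σ·[σ] ∈ 𝒵_d with f_σ ∈ K[t], one has ∂^d(a) = Σ_{σ ∈ Σ_d} f_σ·t^{c(σ)}. -/

import Mathlib

open Polynomial

/-- `𝒵_n = K[t][Σ_n]`, the group algebra of the symmetric group on `n` letters
over the polynomial ring `K[t]`. -/
abbrev Zn (K : Type) [Field K] (n : ℕ) : Type :=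
  MonoidAlgebra (Polynomial K) (Equiv.Perm (Fin n))

/-- `KΣ_n`, the group algebra of the symmetric group over `K`. -/
abbrev GA (K : Type) [Field K] (n : ℕ) : Type :=
  MonoidAlgebra K (Equiv.Perm (Fin n))

/-- The basis element `[σ]` of `𝒵_n`. -/
noncomputable def zbasis {K : Type} [Field K] {n : ℕ} (σ : Equiv.Perm (Fin n)) : Zn K n :=
  MonoidAlgebra.single σ 1

/-- For `σ ∈ Σ_{n+1}`, the permutation `τ ∈ Σ_n` with `τ (σ⁻¹ n) = σ n` and
`τ k = σ k` for all other `k`; if `σ` fixes the last point this is the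
restriction of `σ`. -/
def reduceLast {n : ℕ} (σ : Equiv.Perm (Fin (n + 1))) : Equiv.Perm (Fin n) :=
  Equiv.removeNone (finSuccEquivLast.permCongr σ)

/-- The contraction `∂ : 𝒵_{n+1} → 𝒵_n`: the `K[t]`-linear map with
`∂[σ] = t·[σ']` if `σ` fixes the last point (`σ'` the restriction) and
`∂[σ] = [reduceLast σ]` otherwise. -/
noncomputable def contractZ {K : Type} [Field K] {n : ℕ} (a : Zn K (n + 1)) : Zn K n :=
  Finsupp.sum a.coeff fun σ f =>
    MonoidAlgebra.single (reduceLast σ)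
      ((if σ (Fin.last n) = Fin.last n then (X : Polynomial K) else 1) * f)

/-- `σ ⊕ τ ∈ Σ_{p+q}`: acts as `σ` on the first `p` letters and as the
shift of `τ` on the last `q` letters. -/
def permShift {p q : ℕ} (σ : Equiv.Perm (Fin p)) (τ : Equiv.Perm (Fin q)) :
    Equiv.Perm (Fin (p + q)) :=
  finSumFinEquiv.permCongr (Equiv.sumCongr σ τ)

/-- The tensor product `⊗ : 𝒵_p × 𝒵_q → 𝒵_{p+q}`, the `K[t]`-bilinear map with
`[σ] ⊗ [τ] = [σ ⊕ τ]`. -/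
noncomputable def ztensor {K : Type} [Field K] {p q : ℕ} (a : Zn K p) (b : Zn K q) :
    Zn K (p + q) :=
  Finsupp.sum a.coeff fun σ f => Finsupp.sum b.coeff fun τ g =>
    MonoidAlgebra.single (permShift σ τ) (f * g)

/-- An ideal of the wheeled PROP `𝒵`: a family `I_n ⊆ 𝒵_n` such that each `I_n` is a
two-sided ideal of the ring `K[t][Σ_n]`, closed under tensoring (on either side) with
arbitrary elements, and closed under contraction. -/
structure ZIdeal (K : Type) [Field K] where
  carrier : ∀ n : ℕ, Set (Zn K n)
  zero_mem : ∀ n : ℕ, (0 : Zn K n) ∈ carrier n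
  add_mem : ∀ (n : ℕ) (a b : Zn K n), a ∈ carrier n → b ∈ carrier n → a + b ∈ carrier n
  neg_mem : ∀ (n : ℕ) (a : Zn K n), a ∈ carrier n → -a ∈ carrier n
  mul_mem_left : ∀ (n : ℕ) (r a : Zn K n), a ∈ carrier n → r * a ∈ carrier n
  mul_mem_right : ∀ (n : ℕ) (r a : Zn K n), a ∈ carrier n → a * r ∈ carrier n
  tensor_mem_left : ∀ (p q : ℕ) (a : Zn K p) (b : Zn K q),
    a ∈ carrier p → ztensor a b ∈ carrier (p + q)
  tensor_mem_right : ∀ (p q : ℕ) (a : Zn K p) (b : Zn K q),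
    a ∈ carrier p → ztensor b a ∈ carrier (q + p)
  contract_mem : ∀ (n : ℕ) (a : Zn K (n + 1)), a ∈ carrier (n + 1) → contractZ a ∈ carrier n

/-- A nonzero ideal of `𝒵`. -/
def ZIdeal.Nonzero {K : Type} [Field K] (I : ZIdeal K) : Prop :=
  ∃ (d : ℕ) (a : Zn K d), a ∈ I.carrier d ∧ a ≠ 0

/-- A standard Young tableau of shape `μ` with entries in `Fin n`:
a bijection from the cells of `μ` to `Fin n` (thought of as the entries `1,…,n`)
that increases along rows and columns.  (Coordinates of cells are 0-indexed,
in matrix convention: `(i, j)` is row `i`, column `j`.) -/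
structure SYT (μ : YoungDiagram) (n : ℕ) where
  toEquiv : {c : ℕ × ℕ // c ∈ μ} ≃ Fin n
  row_lt : ∀ c d : {c : ℕ × ℕ // c ∈ μ},
    c.1.1 = d.1.1 → c.1.2 < d.1.2 → toEquiv c < toEquiv d
  col_lt : ∀ c d : {c : ℕ × ℕ // c ∈ μ},
    c.1.2 = d.1.2 → c.1.1 < d.1.1 → toEquiv c < toEquiv d

/-- `σ` belongs to the row stabilizer `R(T)` of the tableau `T`. -/
def isRowStab {μ : YoungDiagram} {n : ℕ} (T : SYT μ n) (σ : Equiv.Perm (Fin n)) : Prop :=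
  ∀ k : Fin n, (T.toEquiv.symm (σ k)).1.1 = (T.toEquiv.symm k).1.1

/-- `σ` belongs to the column stabilizer `C(T)` of the tableau `T`. -/
def isColStab {μ : YoungDiagram} {n : ℕ} (T : SYT μ n) (σ : Equiv.Perm (Fin n)) : Prop :=
  ∀ k : Fin n, (T.toEquiv.symm (σ k)).1.2 = (T.toEquiv.symm k).1.2

open Classical in
/-- The Young symmetrizer `y_T = Σ_{σ ∈ R(T), π ∈ C(T)} sgn(π)·[π σ]`, with
coefficients in a commutative ring `R`. -/
noncomputable def ySym (R : Type) [CommRing R] {μ : YoungDiagram} {n : ℕ} (T : SYT μ n) :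
    MonoidAlgebra R (Equiv.Perm (Fin n)) :=
  ∑ σ : Equiv.Perm (Fin n), ∑ π : Equiv.Perm (Fin n),
    if isRowStab T σ ∧ isColStab T π then
      MonoidAlgebra.single (π * σ) (((Equiv.Perm.sign π : ℤ) : R))
    else 0

/-- The two-sided span `A·S·A` of a subset `S` of a `K`-algebra `A`,
as a `K`-subspace. -/
noncomputable def twoSidedSpan {K : Type} [Field K] {A : Type} [Ring A] [Algebra K A]
    (S : Set A) : Submodule K A :=
  Submodule.span K {x | ∃ a b : A, ∃ s ∈ S, x = a * s * b}

/-- The simple two-sided ideal `J_λ = KΣ_n · y_T · KΣ_n ⊆ KΣ_n` attached to a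
partition (Young diagram) `μ`; it does not depend on the choice of a standard
Young tableau `T` of shape `μ`, so we take the supremum over all of them. -/
noncomputable def Jideal (K : Type) [Field K] (n : ℕ) (μ : YoungDiagram) :
    Submodule K (GA K n) :=
  ⨆ T : SYT μ n, twoSidedSpan {ySym K T}

/-- The embedding `KΣ_n → K[t][Σ_n]` (coefficientwise `K → K[t]`). -/
noncomputable def embZ (K : Type) [Field K] (n : ℕ) : GA K n →ₗ[K] Zn K n :=
  (MonoidAlgebra.coeffLinearEquiv K).symm.toLinearMap ∘ₗ
    Finsupp.mapRange.linearMap (Algebra.linearMap K (Polynomial K)) ∘ₗ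
      (MonoidAlgebra.coeffLinearEquiv K).toLinearMap

/-- `J_λ`, regarded inside `𝒵_n = K[t][Σ_n]` (as a `K`-subspace). -/
noncomputable def JZ (K : Type) [Field K] (n : ℕ) (μ : YoungDiagram) :
    Submodule K (Zn K n) :=
  Submodule.map (embZ K n) (Jideal K n μ)

/-- `L·J_λ ⊆ 𝒵_n`: the `K`-span of products `f • x` with `f ∈ L ⊆ K[t]`, `x ∈ J_λ`. -/
noncomputable def LJ (K : Type) [Field K] (n : ℕ) (L : Ideal (Polynomial K))
    (μ : YoungDiagram) : Submodule K (Zn K n) :=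
  Submodule.span K {x | ∃ f ∈ L, ∃ y ∈ JZ K n μ, x = f • y}

/-- The partitions of `n`, as Young diagrams with `n` cells. -/
def Par (n : ℕ) : Type := {μ : YoungDiagram // μ.card = n}

/-- `I_n` decomposes as the direct sum `⊕_{λ ⊢ n} L_λ·J_λ`. -/
def IsDecomp (K : Type) [Field K] (n : ℕ) (S : Set (Zn K n))
    (L : Par n → Ideal (Polynomial K)) : Prop :=
  S = ↑(⨆ μ : Par n, LJ K n (L μ) μ.1) ∧ iSupIndep fun μ : Par n => LJ K n (L μ) μ.1

/-- For a monic `f ∈ K[t]` and a finite set `C` of boxes, the polynomial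
`g_λ = f · ∏_{(i,j) ∈ C, (i,j) ∉ λ} (t + j − i)`. -/
noncomputable def gOf (K : Type) [Field K] (f : Polynomial K) (C : Finset (ℕ × ℕ))
    (μ : YoungDiagram) : Polynomial K :=
  f * ∏ c ∈ C.filter (fun c => c ∉ μ), ((X : Polynomial K) + (c.2 : Polynomial K) - (c.1 : Polynomial K))

/-- The `n`-th piece of the ideal `I(f, C)` of `𝒵`:
`I(f,C)_n = ⊕_{λ ⊢ n} (g_λ)·J_λ`. -/
noncomputable def IfcCarrier (K : Type) [Field K] (f : Polynomial K) (C : Finset (ℕ × ℕ))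
    (n : ℕ) : Set (Zn K n) :=
  ↑(⨆ μ : Par n, LJ K n (Ideal.span {gOf K f C μ.1}) μ.1)

-- statement 0 extras
/-- The number of cycles of `σ`, counting fixed points as cycles. -/
def cycleCount {d : ℕ} (σ : Equiv.Perm (Fin d)) : ℕ :=
  σ.cycleType.card + (d - σ.cycleType.sum)

/-- The `d`-fold contraction `∂^d : 𝒵_d → 𝒵_0`. -/
noncomputable def contractIter (K : Type) [Field K] : (d : ℕ) → Zn K d → Zn K 0
  | 0, a => a
  | d + 1, a => contractIter K d (contractZ a)


section AuxCycle
open Equiv Equiv.Perm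


variable {α β : Type*} [Fintype α] [DecidableEq α] [Fintype β] [DecidableEq β]

theorem cycleType_permCongr (e : α ≃ β) (g : Perm α) :
    cycleType (e.permCongr g) = cycleType g := by
  have h : e.permCongr g = g.extendDomain
      (e.trans (Equiv.subtypeUnivEquiv (p := fun _ : β => True) (fun _ => trivial)).symm) := by
    ext b
    rw [Equiv.Perm.extendDomain_apply_subtype _ _ trivial]
    simp [Equiv.subtypeUnivEquiv]
  rw [h, cycleType_extendDomain]

theorem cycleType_optionCongr [DecidableEq (Option α)] [Fintype (Option α)] (g : Perm α) :
    cycleType g.optionCongr = cycleType g := by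
  have h : g.optionCongr = g.extendDomain (Equiv.optionIsSomeEquiv α).symm := by
    refine Equiv.Perm.ext fun o => ?_
    cases o with
    | none =>
      rw [Equiv.Perm.extendDomain_apply_not_subtype]
      · rfl
      · simp
    | some a =>
      have hf := Equiv.Perm.extendDomain_apply_subtype g (Equiv.optionIsSomeEquiv α).symm
        (b := some a) (by simp)
      rw [hf]
      simp [Equiv.optionIsSomeEquiv]
  rw [h, cycleType_extendDomain]


variable {α : Type*} [Fintype α] [DecidableEq α]

theorem key_swap_mul (f : Perm α) (x : α) (hx : f x ≠ x) :
    Multiset.card (swap x (f x) * f).cycleType + (Fintype.card α - (swap x (f x) * f).cycleType.sum)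
      = Multiset.card f.cycleType + (Fintype.card α - f.cycleType.sum) + 1 := by
  have hsumf : f.cycleType.sum ≤ Fintype.card α := by
    rw [Equiv.Perm.sum_cycleType]; exact Finset.card_le_univ _
  by_cases hffx : f (f x) = x
  · -- 2-cycle case
    set ρ := swap x (f x) * f with hρ
    have hfeq : f = swap x (f x) * ρ := by
      rw [hρ, ← mul_assoc, swap_mul_self, one_mul]
    have hdisj : Disjoint (swap x (f x)) ρ := by
      intro y
      by_cases hy1 : y = x
      · right; subst hy1
        simp [hρ, Equiv.swap_apply_right]
      · by_cases hy2 : y = f x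
        · right; subst hy2
          simp [hρ, hffx, Equiv.swap_apply_left]
        · left; exact Equiv.swap_apply_of_ne_of_ne hy1 hy2
    have hct : f.cycleType = (swap x (f x)).cycleType + ρ.cycleType := by
      conv_lhs => rw [hfeq]
      exact hdisj.cycleType_mul
    have hcs : (swap x (f x)).cycleType = {2} := by
      rw [(isCycle_swap (Ne.symm hx)).cycleType, card_support_swap (Ne.symm hx)]
    rw [hcs] at hct
    have h1 : Multiset.card f.cycleType = 1 + Multiset.card ρ.cycleType := by
      rw [hct]; simp [add_comm]
    have h2 : f.cycleType.sum = 2 + ρ.cycleType.sum := by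
      rw [hct]; simp [add_comm]
    omega
  · -- long cycle case
    set c := f.cycleOf x with hc
    have hcyc : IsCycle c := isCycle_cycleOf f hx
    have hcx : c x = f x := cycleOf_apply_self f x
    have hccx : c (f x) = f (f x) := cycleOf_apply_apply_self f x
    set h := c⁻¹ * f with hh
    have hfeq : f = c * h := by rw [hh, ← mul_assoc, mul_inv_cancel, one_mul]
    have hdisj : Disjoint c h := by
      intro y
      by_cases hs : f.SameCycle x y
      · right
        have : c y = f y := hs.cycleOf_apply
        rw [hh, mul_apply, ← this, Equiv.Perm.inv_def, Equiv.symm_apply_apply]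
      · left; exact cycleOf_apply_of_not_sameCycle hs
    set c' := swap x (f x) * c with hc'
    have hcyc' : IsCycle c' := by
      have := hcyc.swap_mul (by rw [hcx]; exact hx) (by rw [hcx, hccx]; exact hffx)
      rwa [hcx] at this
    have hsupp' : c'.support = c.support \ {x} := by
      have := support_swap_mul_eq c x (by rw [hcx, hccx]; exact hffx)
      rwa [hcx] at this
    have hxc : x ∈ c.support := by
      rw [mem_support_cycleOf_iff]
      exact ⟨Equiv.Perm.SameCycle.refl _ _, mem_support.mpr hx⟩
    have hcard' : c'.support.card = c.support.card - 1 := by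
      rw [hsupp', Finset.card_sdiff_of_subset (Finset.singleton_subset_iff.mpr hxc)]
      simp
    have h2le : 2 ≤ c.support.card := hcyc.two_le_card_support
    have hdisj' : Disjoint c' h := by
      intro y
      rcases hdisj y with hy | hy
      · left
        have : y ∉ c.support := notMem_support.mpr hy
        have : y ∉ c'.support := by rw [hsupp']; simp [this]
        exact notMem_support.mp this
      · right; exact hy
    have hρeq : swap x (f x) * f = c' * h := by
      rw [hc', hh, mul_assoc, ← mul_assoc c, mul_inv_cancel, one_mul]
    have hctf : f.cycleType = {c.support.card} + h.cycleType := by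
      conv_lhs => rw [hfeq, hdisj.cycleType_mul, hcyc.cycleType]
    have hctρ : (swap x (f x) * f).cycleType
        = {c.support.card - 1} + h.cycleType := by
      rw [hρeq, hdisj'.cycleType_mul, hcyc'.cycleType, hcard']
    have e1 : Multiset.card f.cycleType = 1 + Multiset.card h.cycleType := by rw [hctf]; simp [add_comm]
    have e2 : f.cycleType.sum = c.support.card + h.cycleType.sum := by rw [hctf]; simp [add_comm]
    have e3 : Multiset.card (swap x (f x) * f).cycleType = 1 + Multiset.card h.cycleType := by
      rw [hctρ]; simp [add_comm]
    have e4 : (swap x (f x) * f).cycleType.sum = (c.support.card - 1) + h.cycleType.sum := by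
      rw [hctρ]; simp [add_comm]
    omega

theorem cycleCount_reduceLast {n : ℕ} (σ : Equiv.Perm (Fin (n + 1))) :
    cycleCount σ =
      cycleCount (reduceLast σ) + (if σ (Fin.last n) = Fin.last n then 1 else 0) := by
  classical
  set π := finSuccEquivLast.permCongr σ with hπdef
  have hπct : π.cycleType = σ.cycleType := cycleType_permCongr _ _
  have hred : reduceLast σ = Equiv.removeNone π := rfl
  have hπnone : π none = finSuccEquivLast (σ (Fin.last n)) := by
    simp [hπdef, Equiv.permCongr_apply]
  have hredct : (reduceLast σ).cycleType = (swap none (π none) * π).cycleType := by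
    rw [← cycleType_optionCongr (reduceLast σ), hred, map_equiv_removeNone]
  have hsumred : (reduceLast σ).cycleType.sum ≤ n := by
    rw [Equiv.Perm.sum_cycleType]
    simpa using Finset.card_le_univ (reduceLast σ).support
  have hsumσ : σ.cycleType.sum ≤ n + 1 := by
    rw [Equiv.Perm.sum_cycleType]
    simpa using Finset.card_le_univ σ.support
  by_cases hfix : σ (Fin.last n) = Fin.last n
  · have hnone : π none = none := by rw [hπnone, hfix]; simp
    have : (reduceLast σ).cycleType = σ.cycleType := by
      rw [hredct, hnone, Equiv.swap_self]
      have : (Equiv.refl (Option (Fin n)) : Equiv.Perm (Option (Fin n))) = 1 := rfl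
      rw [this, one_mul, hπct]
    rw [this] at hsumred
    simp only [if_pos hfix]
    unfold cycleCount
    rw [this]
    omega
  · have hnone : π none ≠ none := by
      rw [hπnone]
      intro hcon
      apply hfix
      apply finSuccEquivLast.injective
      rw [hcon]
      simp
    have hkey := key_swap_mul π none hnone
    rw [← hredct, hπct] at hkey
    simp only [Fintype.card_option, Fintype.card_fin] at hkey
    simp only [if_neg hfix]
    unfold cycleCount
    omega

end AuxCycle

section AuxAlg

variable {K : Type} [Field K]

theorem contractZ_single {n : ℕ} (σ : Equiv.Perm (Fin (n + 1))) (f : Polynomial K) :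
    contractZ (MonoidAlgebra.single σ f) =
      MonoidAlgebra.single (reduceLast σ)
        ((if σ (Fin.last n) = Fin.last n then (X : Polynomial K) else 1) * f) := by
  unfold contractZ
  rw [MonoidAlgebra.coeff_single]
  exact Finsupp.sum_single_index (by simp)

theorem contractZ_add {n : ℕ} (a b : Zn K (n + 1)) :
    contractZ (a + b) = contractZ a + contractZ b := by
  unfold contractZ
  rw [MonoidAlgebra.coeff_add]
  exact Finsupp.sum_add_index' (fun σ => by simp)
    (fun σ b₁ b₂ => by rw [mul_add]; exact MonoidAlgebra.single_add _ _ _)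

theorem contractZ_zero {n : ℕ} : contractZ (0 : Zn K (n + 1)) = 0 := by
  unfold contractZ
  rw [MonoidAlgebra.coeff_zero]
  exact Finsupp.sum_zero_index

theorem contractIter_add (d : ℕ) (a b : Zn K d) :
    contractIter K d (a + b) = contractIter K d a + contractIter K d b := by
  induction d with
  | zero => rfl
  | succ d ih =>
    show contractIter K d (contractZ (a + b)) = _
    rw [contractZ_add, ih]
    rfl

theorem contractIter_zero (d : ℕ) :
    contractIter K d (0 : Zn K d) = 0 := by
  induction d with
  | zero => rfl
  | succ d ih =>
    show contractIter K d (contractZ (0 : Zn K (d+1))) = 0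
    rw [contractZ_zero, ih]

theorem contractIter_single (d : ℕ) (σ : Equiv.Perm (Fin d)) (f : Polynomial K) :
    contractIter K d (MonoidAlgebra.single σ f) =
      MonoidAlgebra.single (1 : Equiv.Perm (Fin 0)) (f * (X : Polynomial K) ^ cycleCount σ) := by
  induction d generalizing f with
  | zero =>
    have hσ : σ = 1 := Subsingleton.elim _ _
    have hc : cycleCount (1 : Equiv.Perm (Fin 0)) = 0 := by
      unfold cycleCount
      simp
    rw [hσ, hc, pow_zero, mul_one]
    rfl
  | succ d ih =>
    show contractIter K d (contractZ (MonoidAlgebra.single σ f)) = _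
    rw [contractZ_single, ih, cycleCount_reduceLast σ]
    by_cases hfix : σ (Fin.last d) = Fin.last d
    · simp only [if_pos hfix]
      congr 1
      rw [pow_add, pow_one]
      ring
    · simp only [if_neg hfix]
      rw [one_mul, add_zero]

end AuxAlg

theorem stmt0 (K : Type) [Field K] [CharZero K] (d : ℕ) :
    (∀ σ : Equiv.Perm (Fin d),
      contractIter K d (zbasis σ) =
        MonoidAlgebra.single (1 : Equiv.Perm (Fin 0)) ((X : Polynomial K) ^ cycleCount σ)) ∧
    (∀ f : Equiv.Perm (Fin d) → Polynomial K,
      contractIter K d (∑ σ : Equiv.Perm (Fin d), MonoidAlgebra.single σ (f σ)) =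
        MonoidAlgebra.single (1 : Equiv.Perm (Fin 0))
          (∑ σ : Equiv.Perm (Fin d), f σ * (X : Polynomial K) ^ cycleCount σ)) := by
  constructor
  · intro σ
    rw [zbasis, contractIter_single, one_mul]
  · intro f
    have hsum : contractIter K d (∑ σ : Equiv.Perm (Fin d), MonoidAlgebra.single σ (f σ)) =
        ∑ σ : Equiv.Perm (Fin d), contractIter K d (MonoidAlgebra.single σ (f σ)) := by
      classical
      induction (Finset.univ : Finset (Equiv.Perm (Fin d))) using Finset.induction_on with
      | empty => simpa using contractIter_zero (K := K) d
      | insert _ _ hns ih =>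
        rw [Finset.sum_insert hns, Finset.sum_insert hns, contractIter_add, ih]
    rw [hsum]
    simp only [contractIter_single]
    exact (map_sum (MonoidAlgebra.singleAddHom (1 : Equiv.Perm (Fin 0))) _ _).symm
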